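/- Let x, y ∈ L¹(0,∞). If ∫₀^∞ f(x(t)) dt ≤ ∫₀^∞ f(y(t)) dt holds for every convex function f : ℝ → ℝ with f(0) = 0 such that f∘x and f∘y are integrable, then x ≺ y, i.e., x₊ ≺≺ y₊, x₋ ≺≺ y₋, and ∫x = ∫y. -/

import Mathlib

open MeasureTheory Set

/-- Decreasing rearrangement of `|f|` with respect to Lebesgue measure on `(0,∞)`. -/
noncomputable def rearr (f : ℝ → ℝ) (t : ℝ) : ℝ :=
  sInf {s : ℝ | 0 ≤ s ∧ (volume.restrict (Set.Ioi (0:ℝ))) {x | s < |f x|} ≤ ENNReal.ofReal t}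

/-- Positive part of a function. -/
noncomputable def posPart' (f : ℝ → ℝ) : ℝ → ℝ := fun t => max (f t) 0

/-- Negative part of a function. -/
noncomputable def negPart' (f : ℝ → ℝ) : ℝ → ℝ := fun t => max (-f t) 0

/-- Hardy–Littlewood–Pólya submajorization on `(0,∞)`. -/
def SubMaj (f g : ℝ → ℝ) : Prop :=
  ∀ t : ℝ, 0 ≤ t →
    (∫ s in Set.Ioc (0:ℝ) t, rearr f s) ≤ ∫ s in Set.Ioc (0:ℝ) t, rearr g s

/-- Hardy–Littlewood–Pólya majorization on `(0,∞)`: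
`f₊ ≺≺ g₊`, `f₋ ≺≺ g₋` and `∫ f = ∫ g`. -/
def Maj (f g : ℝ → ℝ) : Prop :=
  SubMaj (posPart' f) (posPart' g) ∧ SubMaj (negPart' f) (negPart' g) ∧
    (∫ t in Set.Ioi (0:ℝ), f t) = ∫ t in Set.Ioi (0:ℝ), g t

/-! ### Auxiliary theory of the distribution function and decreasing rearrangement -/

open ENNReal

/-- The distribution function of `|f|` with respect to Lebesgue measure on `(0,∞)`. -/
noncomputable def dd (f : ℝ → ℝ) (r : ℝ) : ℝ≥0∞ :=
  (volume.restrict (Set.Ioi (0:ℝ))) {x | r < |f x|}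

lemma dd_def (f : ℝ → ℝ) (r : ℝ) :
    dd f r = (volume.restrict (Set.Ioi (0:ℝ))) {x | r < |f x|} := rfl

lemma rearr_def (f : ℝ → ℝ) (t : ℝ) :
    rearr f t = sInf {s : ℝ | 0 ≤ s ∧ dd f s ≤ ENNReal.ofReal t} := rfl

lemma dd_antitone (f : ℝ → ℝ) : Antitone (dd f) := fun _ _ hrs =>
  measure_mono (fun _ hx => lt_of_le_of_lt hrs hx)

lemma dd_iSup (f : ℝ → ℝ) (r : ℝ) :
    dd f r = ⨆ n : ℕ, dd f (r + 1/(n+1)) := by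
  have hU : {x : ℝ | r < |f x|} = ⋃ n : ℕ, {x : ℝ | r + 1/(n+1) < |f x|} := by
    ext x
    simp only [mem_setOf_eq, mem_iUnion]
    constructor
    · intro hx
      obtain ⟨n, hn⟩ := exists_nat_one_div_lt (sub_pos.mpr hx)
      exact ⟨n, by linarith⟩
    · rintro ⟨n, hn⟩
      have : (0:ℝ) < 1/(n+1) := by positivity
      linarith
  have hmono : Monotone (fun n : ℕ => {x : ℝ | r + 1/(n+1) < |f x|}) := by
    intro n m hnm x hx
    simp only [mem_setOf_eq] at *
    have hc : (n:ℝ) ≤ m := Nat.cast_le.mpr hnm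
    have h1 : (1:ℝ)/(m+1) ≤ 1/(n+1) := by
      apply one_div_le_one_div_of_le (by positivity)
      linarith
    linarith
  simp only [dd]
  rw [hU, hmono.measure_iUnion]

lemma rearr_nonneg (f : ℝ → ℝ) (t : ℝ) : 0 ≤ rearr f t :=
  Real.sInf_nonneg (fun _ hs => hs.1)

lemma lint_abs_lt_top {f : ℝ → ℝ} (hf : IntegrableOn f (Set.Ioi 0)) :
    (∫⁻ x in Set.Ioi (0:ℝ), ENNReal.ofReal |f x|) < ⊤ := by
  have := hf.abs.2
  rwa [hasFiniteIntegral_iff_ofReal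
    (Filter.Eventually.of_forall (fun x => abs_nonneg (f x)))] at this

lemma dd_le {f : ℝ → ℝ} (hf : IntegrableOn f (Set.Ioi 0)) {r : ℝ} (hr : 0 < r) :
    dd f r ≤ (∫⁻ x in Set.Ioi (0:ℝ), ENNReal.ofReal |f x|) / ENNReal.ofReal r := by
  have hm : AEMeasurable (fun x => ENNReal.ofReal |f x|) (volume.restrict (Set.Ioi (0:ℝ))) :=
    (hf.abs.aestronglyMeasurable.aemeasurable).ennreal_ofReal
  have hmar := mul_meas_ge_le_lintegral₀ hm (ENNReal.ofReal r)
  have hsub : dd f r ≤ (volume.restrict (Set.Ioi (0:ℝ)))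
      {x | ENNReal.ofReal r ≤ ENNReal.ofReal |f x|} :=
    measure_mono (fun x hx => ENNReal.ofReal_le_ofReal (le_of_lt hx))
  rw [ENNReal.le_div_iff_mul_le (Or.inl (by simpa using hr)) (Or.inl ofReal_ne_top)]
  calc dd f r * ENNReal.ofReal r = ENNReal.ofReal r * dd f r := mul_comm _ _
    _ ≤ ENNReal.ofReal r * _ := mul_le_mul_right hsub _
    _ ≤ _ := hmar

lemma rearr_set_nonempty {f : ℝ → ℝ} (hf : IntegrableOn f (Set.Ioi 0)) {t : ℝ} (ht : 0 < t) :
    {s : ℝ | 0 ≤ s ∧ dd f s ≤ ENNReal.ofReal t}.Nonempty := by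
  set I := ∫⁻ x in Set.Ioi (0:ℝ), ENNReal.ofReal |f x| with hI
  refine ⟨I.toReal / t + 1, ⟨by positivity, ?_⟩⟩
  have hs : (0:ℝ) < I.toReal / t + 1 := by positivity
  calc dd f (I.toReal / t + 1) ≤ I / ENNReal.ofReal (I.toReal / t + 1) := dd_le hf hs
    _ ≤ ENNReal.ofReal t := by
        rw [ENNReal.div_le_iff_le_mul (Or.inl (by simpa using hs)) (Or.inl ENNReal.ofReal_ne_top)]
        rw [← ENNReal.ofReal_mul ht.le]
        calc I = ENNReal.ofReal I.toReal := (ENNReal.ofReal_toReal (lint_abs_lt_top hf).ne).symm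
          _ ≤ _ := by
              apply ENNReal.ofReal_le_ofReal
              rw [mul_add, mul_div_cancel₀ _ ht.ne', mul_one]
              linarith [ENNReal.toReal_nonneg (a := I)]

lemma rearr_bddBelow (f : ℝ → ℝ) (t : ℝ) :
    BddBelow {s : ℝ | 0 ≤ s ∧ dd f s ≤ ENNReal.ofReal t} :=
  ⟨0, fun _ hs => hs.1⟩

lemma rearr_anti {f : ℝ → ℝ} {s t : ℝ} (hs : 0 < s)
    (hf : IntegrableOn f (Set.Ioi 0)) (hst : s ≤ t) : rearr f t ≤ rearr f s := by
  rw [rearr_def, rearr_def]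
  exact csInf_le_csInf (rearr_bddBelow f t) (rearr_set_nonempty hf hs)
    (fun r hr => ⟨hr.1, hr.2.trans (ENNReal.ofReal_le_ofReal hst)⟩)

lemma lt_rearr_iff {f : ℝ → ℝ} (hf : IntegrableOn f (Set.Ioi 0)) {t r : ℝ}
    (ht : 0 < t) (hr : 0 ≤ r) : r < rearr f t ↔ ENNReal.ofReal t < dd f r := by
  constructor
  · intro h
    by_contra hc
    push_neg at hc
    have : rearr f t ≤ r := by
      rw [rearr_def]
      exact csInf_le (rearr_bddBelow f t) ⟨hr, hc⟩
    linarith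
  · intro h
    have h2 : ∃ n : ℕ, ENNReal.ofReal t < dd f (r + 1/(n+1)) := by
      rw [dd_iSup] at h
      exact lt_iSup_iff.mp h
    obtain ⟨n, hn⟩ := h2
    have hpos : (0:ℝ) < 1/(n+1) := by positivity
    have : r + 1/(n+1) ≤ rearr f t := by
      rw [rearr_def]
      apply le_csInf (rearr_set_nonempty hf ht)
      intro b hb
      by_contra hc
      push_neg at hc
      exact absurd (hb.2) (not_le.mpr (lt_of_lt_of_le hn (dd_antitone f hc.le)))
    linarith

lemma vol_lt_set (c : ℝ≥0∞) : volume {s : ℝ | 0 < s ∧ ENNReal.ofReal s < c} = c := by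
  rcases eq_or_ne c ⊤ with hc | hc
  · have : {s : ℝ | 0 < s ∧ ENNReal.ofReal s < c} = Set.Ioi 0 := by
      ext s; simp [hc, ofReal_lt_top, mem_Ioi]
    rw [this, hc]
    simp [Real.volume_Ioi]
  · have : {s : ℝ | 0 < s ∧ ENNReal.ofReal s < c} = Set.Ioo 0 c.toReal := by
      ext s
      simp only [mem_setOf_eq, mem_Ioo]
      constructor
      · rintro ⟨h1, h2⟩
        exact ⟨h1, (ENNReal.ofReal_lt_iff_lt_toReal h1.le hc).mp h2⟩
      · rintro ⟨h1, h2⟩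
        exact ⟨h1, (ENNReal.ofReal_lt_iff_lt_toReal h1.le hc).mpr h2⟩
    rw [this, Real.volume_Ioo, sub_zero, ENNReal.ofReal_toReal hc]

lemma rearr_level_set {f : ℝ → ℝ} (hf : IntegrableOn f (Set.Ioi 0)) {r : ℝ} (hr : 0 ≤ r) :
    {s : ℝ | 0 < s ∧ r < rearr f s} = {s : ℝ | 0 < s ∧ ENNReal.ofReal s < dd f r} := by
  ext s
  simp only [mem_setOf_eq]
  exact and_congr_right (fun hs => lt_rearr_iff hf hs hr)

lemma dist_rearr {f : ℝ → ℝ} (hf : IntegrableOn f (Set.Ioi 0)) {r : ℝ} (hr : 0 ≤ r) :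
    (volume.restrict (Set.Ioi (0:ℝ))) {s : ℝ | r < rearr f s} = dd f r := by
  rw [Measure.restrict_apply' measurableSet_Ioi]
  have : {s : ℝ | r < rearr f s} ∩ Set.Ioi 0 = {s : ℝ | 0 < s ∧ r < rearr f s} := by
    ext s; simp [mem_Ioi, and_comm]
  rw [this, rearr_level_set hf hr, vol_lt_set (dd f r)]

lemma rearr_indicator_measurable {f : ℝ → ℝ} (hf : IntegrableOn f (Set.Ioi 0)) :
    Measurable ((Set.Ioi (0:ℝ)).indicator (rearr f)) := by
  apply measurable_of_Ioi
  intro a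
  rcases lt_or_ge a 0 with ha | ha
  · have : (Set.Ioi (0:ℝ)).indicator (rearr f) ⁻¹' Set.Ioi a = Set.univ := by
      ext s
      simp only [Set.mem_preimage, Set.mem_Ioi, Set.mem_univ, iff_true]
      by_cases hs : s ∈ Set.Ioi (0:ℝ)
      · rw [Set.indicator_of_mem hs]; exact lt_of_lt_of_le ha (rearr_nonneg f s)
      · rw [Set.indicator_of_notMem hs]; exact ha
    rw [this]; exact MeasurableSet.univ
  · have : (Set.Ioi (0:ℝ)).indicator (rearr f) ⁻¹' Set.Ioi a
        = {s : ℝ | 0 < s ∧ ENNReal.ofReal s < dd f a} := by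
      rw [← rearr_level_set hf ha]
      ext s
      simp only [Set.mem_preimage, Set.mem_Ioi, mem_setOf_eq]
      by_cases hs : s ∈ Set.Ioi (0:ℝ)
      · rw [Set.indicator_of_mem hs]; exact ⟨fun h => ⟨hs, h⟩, fun h => h.2⟩
      · rw [Set.indicator_of_notMem hs]
        simp only [Set.mem_Ioi] at hs
        exact ⟨fun h => absurd ha (not_le.mpr h), fun h => absurd h.1 hs⟩
    rw [this]
    rcases eq_or_ne (dd f a) ⊤ with hc | hc
    · have : {s : ℝ | 0 < s ∧ ENNReal.ofReal s < dd f a} = Set.Ioi 0 := by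
        ext s; simp [hc, ofReal_lt_top, mem_Ioi]
      rw [this]; exact measurableSet_Ioi
    · have : {s : ℝ | 0 < s ∧ ENNReal.ofReal s < dd f a} = Set.Ioo 0 (dd f a).toReal := by
        ext s
        simp only [mem_setOf_eq, mem_Ioo]
        exact and_congr_right (fun h1 => ENNReal.ofReal_lt_iff_lt_toReal h1.le hc)
      rw [this]; exact measurableSet_Ioo

lemma rearr_aemeasurable {f : ℝ → ℝ} (hf : IntegrableOn f (Set.Ioi 0)) :
    AEMeasurable (rearr f) (volume.restrict (Set.Ioi (0:ℝ))) := by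
  refine ⟨(Set.Ioi (0:ℝ)).indicator (rearr f), rearr_indicator_measurable hf, ?_⟩
  rw [Filter.EventuallyEq, ae_restrict_iff' measurableSet_Ioi]
  exact Filter.Eventually.of_forall (fun s hs => (Set.indicator_of_mem hs _).symm)

lemma lint_eq {f : ℝ → ℝ} (hf : IntegrableOn f (Set.Ioi 0)) (hfnn : ∀ x, 0 ≤ f x)
    {r : ℝ} (hr : 0 ≤ r) :
    (∫⁻ s in Set.Ioi (0:ℝ), ENNReal.ofReal (max (rearr f s - r) 0)) =
      ∫⁻ s in Set.Ioi (0:ℝ), ENNReal.ofReal (max (f s - r) 0) := by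
  have hmL : AEMeasurable (fun s => max (rearr f s - r) 0) (volume.restrict (Set.Ioi (0:ℝ))) :=
    ((rearr_aemeasurable hf).sub_const r).max aemeasurable_const
  have hmR : AEMeasurable (fun s => max (f s - r) 0) (volume.restrict (Set.Ioi (0:ℝ))) :=
    (hf.aestronglyMeasurable.aemeasurable.sub_const r).max aemeasurable_const
  have keyL := lintegral_eq_lintegral_meas_lt (f := fun s => max (rearr f s - r) 0)
    (volume.restrict (Set.Ioi (0:ℝ)))
    (Filter.Eventually.of_forall (fun s => le_max_right _ _)) hmL
  have keyR := lintegral_eq_lintegral_meas_lt (f := fun s => max (f s - r) 0)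
    (volume.restrict (Set.Ioi (0:ℝ)))
    (Filter.Eventually.of_forall (fun s => le_max_right _ _)) hmR
  rw [keyL, keyR]
  apply lintegral_congr_ae
  rw [Filter.EventuallyEq, ae_restrict_iff' measurableSet_Ioi]
  apply Filter.Eventually.of_forall
  intro u hu
  simp only [Set.mem_Ioi] at hu
  have h1 : {s : ℝ | u < max (rearr f s - r) 0} = {s : ℝ | r + u < rearr f s} := by
    ext s
    simp only [mem_setOf_eq, lt_max_iff]
    constructor
    · rintro (h | h)
      · linarith
      · linarith
    · intro h
      exact Or.inl (by linarith)
  have h2 : {s : ℝ | u < max (f s - r) 0} = {s : ℝ | r + u < |f s|} := by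
    ext s
    simp only [mem_setOf_eq, lt_max_iff, abs_of_nonneg (hfnn s)]
    constructor
    · rintro (h | h)
      · linarith
      · linarith
    · intro h
      exact Or.inl (by linarith)
  rw [h1, h2, dist_rearr hf (by positivity), dd_def]

lemma integrable_cut {f : ℝ → ℝ} (hf : IntegrableOn f (Set.Ioi 0)) {r : ℝ} (hr : 0 ≤ r) :
    IntegrableOn (fun s => max (f s - r) 0) (Set.Ioi (0:ℝ)) := by
  apply Integrable.mono hf.abs
    (((hf.aestronglyMeasurable.aemeasurable.sub_const r).max
      aemeasurable_const).aestronglyMeasurable)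
  apply Filter.Eventually.of_forall
  intro s
  simp only [Real.norm_eq_abs, abs_abs]
  rw [abs_of_nonneg (le_max_right _ _)]
  rcases le_or_gt (f s - r) 0 with h | h
  · rw [max_eq_right h]; exact abs_nonneg _
  · rw [max_eq_left h.le]
    have := abs_nonneg (f s)
    have := le_abs_self (f s)
    linarith

lemma integrable_rearr_cut {f : ℝ → ℝ} (hf : IntegrableOn f (Set.Ioi 0)) (hfnn : ∀ x, 0 ≤ f x)
    {r : ℝ} (hr : 0 ≤ r) :
    IntegrableOn (fun s => max (rearr f s - r) 0) (Set.Ioi (0:ℝ)) := by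
  constructor
  · exact (((rearr_aemeasurable hf).sub_const r).max aemeasurable_const).aestronglyMeasurable
  · rw [hasFiniteIntegral_iff_ofReal (f := fun s => max (rearr f s - r) 0)
      (Filter.Eventually.of_forall (fun s => le_max_right _ _))]
    rw [lint_eq hf hfnn hr]
    have hint := (integrable_cut hf hr).2
    rwa [hasFiniteIntegral_iff_ofReal (f := fun s => max (f s - r) 0)
      (Filter.Eventually.of_forall (fun s => le_max_right _ _))] at hint

lemma int_cut_eq {f : ℝ → ℝ} (hf : IntegrableOn f (Set.Ioi 0)) (hfnn : ∀ x, 0 ≤ f x)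
    {r : ℝ} (hr : 0 ≤ r) :
    (∫ s in Set.Ioi (0:ℝ), max (rearr f s - r) 0) = ∫ s in Set.Ioi (0:ℝ), max (f s - r) 0 := by
  have keyL := integral_eq_lintegral_of_nonneg_ae (f := fun s => max (rearr f s - r) 0)
    (μ := volume.restrict (Set.Ioi (0:ℝ)))
    (Filter.Eventually.of_forall (fun s => le_max_right _ _))
    (((rearr_aemeasurable hf).sub_const r).max aemeasurable_const).aestronglyMeasurable
  have keyR := integral_eq_lintegral_of_nonneg_ae (f := fun s => max (f s - r) 0)
    (μ := volume.restrict (Set.Ioi (0:ℝ)))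
    (Filter.Eventually.of_forall (fun s => le_max_right _ _))
    ((hf.aestronglyMeasurable.aemeasurable.sub_const r).max aemeasurable_const).aestronglyMeasurable
  rw [keyL, keyR, lint_eq hf hfnn hr]

lemma integrable_rearr {f : ℝ → ℝ} (hf : IntegrableOn f (Set.Ioi 0)) (hfnn : ∀ x, 0 ≤ f x) :
    IntegrableOn (rearr f) (Set.Ioi (0:ℝ)) := by
  have := integrable_rearr_cut hf hfnn (le_refl 0)
  have he : (fun s => max (rearr f s - 0) 0) = rearr f := by
    funext s
    rw [sub_zero, max_eq_left (rearr_nonneg f s)]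
  rwa [he] at this

lemma submaj_main {F G : ℝ → ℝ} (hF : IntegrableOn F (Set.Ioi 0))
    (hG : IntegrableOn G (Set.Ioi 0)) (hFnn : ∀ x, 0 ≤ F x) (hGnn : ∀ x, 0 ≤ G x)
    (hyp : ∀ r : ℝ, 0 ≤ r →
      (∫ s in Set.Ioi (0:ℝ), max (F s - r) 0) ≤ ∫ s in Set.Ioi (0:ℝ), max (G s - r) 0) :
    SubMaj F G := by
  intro t ht
  rcases eq_or_lt_of_le ht with rfl | ht
  · simp
  set r := rearr G t with hrdef
  have hr0 : 0 ≤ r := rearr_nonneg G t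
  have hsub : Set.Ioc (0:ℝ) t ⊆ Set.Ioi 0 := fun s hs => hs.1
  have hvol : (volume (Set.Ioc (0:ℝ) t)).toReal = t := by
    rw [Real.volume_Ioc, ENNReal.toReal_ofReal (by linarith)]
    ring
  have hIF : IntegrableOn (rearr F) (Set.Ioc (0:ℝ) t) :=
    (integrable_rearr hF hFnn).mono_set hsub
  have hIFc : IntegrableOn (fun s => max (rearr F s - r) 0) (Set.Ioc (0:ℝ) t) :=
    (integrable_rearr_cut hF hFnn hr0).mono_set hsub
  have hIconst : IntegrableOn (fun _ : ℝ => r) (Set.Ioc (0:ℝ) t) :=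
    integrableOn_const (by rw [Real.volume_Ioc]; exact ofReal_ne_top)
  have step1 : (∫ s in Set.Ioc (0:ℝ) t, rearr F s)
      ≤ r * t + ∫ s in Set.Ioc (0:ℝ) t, max (rearr F s - r) 0 := by
    have hle : (∫ s in Set.Ioc (0:ℝ) t, rearr F s)
        ≤ ∫ s in Set.Ioc (0:ℝ) t, (r + max (rearr F s - r) 0) := by
      apply setIntegral_mono_on hIF (hIconst.add hIFc) measurableSet_Ioc
      intro s _
      simp only [Pi.add_apply]
      rcases le_or_gt (rearr F s) r with h | h
      · have h2 : max (rearr F s - r) 0 = 0 := max_eq_right (by linarith)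
        rw [h2]; linarith
      · have h2 : max (rearr F s - r) 0 = rearr F s - r := max_eq_left (by linarith)
        rw [h2]; linarith
    rw [integral_add hIconst hIFc, setIntegral_const] at hle
    rw [measureReal_def, hvol] at hle
    simpa [smul_eq_mul, mul_comm] using hle
  have step2 : (∫ s in Set.Ioc (0:ℝ) t, max (rearr F s - r) 0)
      ≤ ∫ s in Set.Ioi (0:ℝ), max (rearr F s - r) 0 := by
    apply setIntegral_mono_set (integrable_rearr_cut hF hFnn hr0)
      (Filter.Eventually.of_forall (fun s => le_max_right _ _))
      (HasSubset.Subset.eventuallyLE hsub)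
  have step3 : (∫ s in Set.Ioi (0:ℝ), max (rearr F s - r) 0)
      ≤ ∫ s in Set.Ioi (0:ℝ), max (rearr G s - r) 0 := by
    rw [int_cut_eq hF hFnn hr0, int_cut_eq hG hGnn hr0]
    exact hyp r hr0
  have hzero : (∫ s in Set.Ioi t, max (rearr G s - r) 0) = 0 := by
    rw [setIntegral_congr_fun measurableSet_Ioi (g := fun _ => (0:ℝ))
      (fun s hs => max_eq_right (by
        have := rearr_anti ht hG (le_of_lt hs)
        simp only [sub_nonpos]
        linarith))]
    simp
  have step4 : (∫ s in Set.Ioi (0:ℝ), max (rearr G s - r) 0)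
      = ∫ s in Set.Ioc (0:ℝ) t, max (rearr G s - r) 0 := by
    rw [← Ioc_union_Ioi_eq_Ioi (le_of_lt ht),
      setIntegral_union (Ioc_disjoint_Ioi le_rfl) measurableSet_Ioi
        ((integrable_rearr_cut hG hGnn hr0).mono_set hsub)
        ((integrable_rearr_cut hG hGnn hr0).mono_set (fun s hs => lt_trans ht hs)),
      hzero, add_zero]
  have step5 : (∫ s in Set.Ioc (0:ℝ) t, max (rearr G s - r) 0)
      = (∫ s in Set.Ioc (0:ℝ) t, rearr G s) - r * t := by
    rw [setIntegral_congr_fun measurableSet_Ioc (g := fun s => rearr G s - r)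
      (fun s hs => max_eq_left (by
        have := rearr_anti hs.1 hG hs.2
        simp only [sub_nonneg]
        linarith))]
    rw [integral_sub ((integrable_rearr hG hGnn).mono_set hsub) hIconst, setIntegral_const, measureReal_def, hvol]
    simp [smul_eq_mul, mul_comm]
  linarith

/-! ### Convexity of the test functions -/

lemma convexOn_cut (r : ℝ) : ConvexOn ℝ Set.univ (fun u : ℝ => max (u - r) 0) := by
  refine ⟨convex_univ, ?_⟩
  intro p _ q _ a b ha hb hab
  simp only [smul_eq_mul]
  apply max_le
  · have key : a * p + b * q - r = a * (p - r) + b * (q - r) := by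
      linear_combination r * hab
    rw [key]
    have h1 : a * (p - r) ≤ a * max (p - r) 0 := mul_le_mul_of_nonneg_left (le_max_left _ _) ha
    have h2 : b * (q - r) ≤ b * max (q - r) 0 := mul_le_mul_of_nonneg_left (le_max_left _ _) hb
    linarith
  · have h1 : 0 ≤ a * max (p - r) 0 := mul_nonneg ha (le_max_right _ _)
    have h2 : 0 ≤ b * max (q - r) 0 := mul_nonneg hb (le_max_right _ _)
    linarith

lemma convexOn_negcut (r : ℝ) : ConvexOn ℝ Set.univ (fun u : ℝ => max (-u - r) 0) := by
  refine ⟨convex_univ, ?_⟩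
  intro p _ q _ a b ha hb hab
  simp only [smul_eq_mul]
  apply max_le
  · have key : -(a * p + b * q) - r = a * (-p - r) + b * (-q - r) := by
      linear_combination r * hab
    rw [key]
    have h1 : a * (-p - r) ≤ a * max (-p - r) 0 := mul_le_mul_of_nonneg_left (le_max_left _ _) ha
    have h2 : b * (-q - r) ≤ b * max (-q - r) 0 := mul_le_mul_of_nonneg_left (le_max_left _ _) hb
    linarith
  · have h1 : 0 ≤ a * max (-p - r) 0 := mul_nonneg ha (le_max_right _ _)
    have h2 : 0 ≤ b * max (-q - r) 0 := mul_nonneg hb (le_max_right _ _)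
    linarith

lemma convexOn_lin : ConvexOn ℝ Set.univ (fun u : ℝ => u) := by
  refine ⟨convex_univ, ?_⟩
  intro p _ q _ a b _ _ _
  simp [smul_eq_mul]

lemma convexOn_neglin : ConvexOn ℝ Set.univ (fun u : ℝ => -u) := by
  refine ⟨convex_univ, ?_⟩
  intro p _ q _ a b _ _ _
  simp only [smul_eq_mul, neg_add, mul_neg]
  linarith

lemma cut_posPart {v r : ℝ} (hr : 0 ≤ r) : max (max v 0 - r) 0 = max (v - r) 0 := by
  rcases le_or_gt v 0 with h | h
  · rw [max_eq_right h, max_eq_right (by linarith), max_eq_right (by linarith)]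
  · rw [max_eq_left h.le]

/-- Converse: if `∫ f∘x ≤ ∫ f∘y` for all convex `f` with `f(0) = 0` making both
compositions integrable, then `x ≺ y`. -/
theorem stmt9 (x y : ℝ → ℝ) (hx : IntegrableOn x (Set.Ioi 0))
    (hy : IntegrableOn y (Set.Ioi 0))
    (h : ∀ f : ℝ → ℝ, ConvexOn ℝ Set.univ f → f 0 = 0 →
      IntegrableOn (fun t => f (x t)) (Set.Ioi 0) →
      IntegrableOn (fun t => f (y t)) (Set.Ioi 0) →
      (∫ t in Set.Ioi (0:ℝ), f (x t)) ≤ ∫ t in Set.Ioi (0:ℝ), f (y t)) :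
    Maj x y := by
  have hxp : IntegrableOn (posPart' x) (Set.Ioi 0) := hx.pos_part
  have hyp' : IntegrableOn (posPart' y) (Set.Ioi 0) := hy.pos_part
  have hxn : IntegrableOn (negPart' x) (Set.Ioi 0) := hx.neg.pos_part
  have hyn : IntegrableOn (negPart' y) (Set.Ioi 0) := hy.neg.pos_part
  refine ⟨?_, ?_, ?_⟩
  · apply submaj_main hxp hyp' (fun s => le_max_right _ _) (fun s => le_max_right _ _)
    intro r hr
    have hcx : IntegrableOn (fun t => max (x t - r) 0) (Set.Ioi 0) := integrable_cut hx hr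
    have hcy : IntegrableOn (fun t => max (y t - r) 0) (Set.Ioi 0) := integrable_cut hy hr
    have key := h (fun u => max (u - r) 0) (convexOn_cut r)
      (by show max ((0:ℝ) - r) 0 = 0; rw [zero_sub, max_eq_right (by linarith)]) hcx hcy
    have ex : (fun s => max (posPart' x s - r) 0) = fun t => max (x t - r) 0 := by
      funext s
      exact cut_posPart hr
    have ey : (fun s => max (posPart' y s - r) 0) = fun t => max (y t - r) 0 := by
      funext s
      exact cut_posPart hr
    rw [ex, ey]
    exact key
  · apply submaj_main hxn hyn (fun s => le_max_right _ _) (fun s => le_max_right _ _)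
    intro r hr
    have hcx : IntegrableOn (fun t => max (-x t - r) 0) (Set.Ioi 0) := integrable_cut hx.neg hr
    have hcy : IntegrableOn (fun t => max (-y t - r) 0) (Set.Ioi 0) := integrable_cut hy.neg hr
    have key := h (fun u => max (-u - r) 0) (convexOn_negcut r)
      (by show max (-(0:ℝ) - r) 0 = 0; rw [neg_zero, zero_sub, max_eq_right (by linarith)]) hcx hcy
    have ex : (fun s => max (negPart' x s - r) 0) = fun t => max (-x t - r) 0 := by
      funext s
      exact cut_posPart hr
    have ey : (fun s => max (negPart' y s - r) 0) = fun t => max (-y t - r) 0 := by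
      funext s
      exact cut_posPart hr
    rw [ex, ey]
    exact key
  · have h1 := h (fun u => u) convexOn_lin rfl hx hy
    have h2 := h (fun u => -u) convexOn_neglin neg_zero hx.neg hy.neg
    simp only [integral_neg] at h2
    exact le_antisymm h1 (by linarith)
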